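/- For the Schnakenberg model with Jacobian J(x) = [[-1/α², -2αβ(x)],[1/α², α(2β(x)-1)]] and diffusion D = diag(1,d), α > 0, 0 < d < 1, the local Turing conditions tr(J(x)) < 0, det(J(x)) > 0, tr(D⁻¹J(x)) > 0, tr(D⁻¹J(x))² - 4 det(D⁻¹J(x)) > 0 hold at a point x if and only if (1/2)(1 + d/α³) + sqrt(d/α³) < β(x) < (1/2)(1 + 1/α³). -/

import Mathlib

open Matrix

/-- The diffusion matrix D = diag(1, d). -/
noncomputable def Dmat (d : ℝ) : Matrix (Fin 2) (Fin 2) ℝ := !![1, 0; 0, d]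

/-- The Schnakenberg Jacobian at the heterogeneous steady state. -/
noncomputable def SchnakJ (α b : ℝ) : Matrix (Fin 2) (Fin 2) ℝ :=
  !![-1 / α ^ 2, -2 * α * b; 1 / α ^ 2, α * (2 * b - 1)]

set_option maxHeartbeats 1000000 in
theorem stmt15 (α d x : ℝ) (β : ℝ → ℝ)
    (hα : 0 < α) (hd : 0 < d) (hd1 : d < 1) (hβ : 0 < β x) :
    ((SchnakJ α (β x)).trace < 0 ∧ 0 < (SchnakJ α (β x)).det ∧
      0 < ((Dmat d)⁻¹ * SchnakJ α (β x)).trace ∧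
      0 < ((Dmat d)⁻¹ * SchnakJ α (β x)).trace ^ 2
          - 4 * ((Dmat d)⁻¹ * SchnakJ α (β x)).det) ↔
    ((1 / 2) * (1 + d / α ^ 3) + Real.sqrt (d / α ^ 3) < β x ∧
      β x < (1 / 2) * (1 + 1 / α ^ 3)) := by
  have hα2 : (0:ℝ) < α ^ 2 := by positivity
  have hα3 : (0:ℝ) < α ^ 3 := by positivity
  have hαne : α ≠ 0 := hα.ne'
  have hdne : d ≠ 0 := hd.ne'
  set b := β x with hb
  -- matrix computations
  have hinv : (Dmat d)⁻¹ = !![1, 0; 0, d⁻¹] := by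
    apply Matrix.inv_eq_right_inv
    rw [Dmat]
    ext i j
    fin_cases i <;> fin_cases j <;>
      simp [Matrix.mul_apply, Fin.sum_univ_two, hdne]
  have hJtr : (SchnakJ α b).trace = -1 / α ^ 2 + α * (2 * b - 1) := by
    rw [SchnakJ, Matrix.trace_fin_two_of]
  have hJdet : (SchnakJ α b).det = 1 / α := by
    rw [SchnakJ, Matrix.det_fin_two_of]
    field_simp
    ring
  have hMtr : ((Dmat d)⁻¹ * SchnakJ α b).trace
      = -1 / α ^ 2 + α * (2 * b - 1) / d := by
    rw [hinv, SchnakJ, Matrix.mul_fin_two, Matrix.trace_fin_two_of]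
    field_simp
    ring
  have hMdet : ((Dmat d)⁻¹ * SchnakJ α b).det = 1 / (α * d) := by
    rw [Matrix.det_mul, hinv, hJdet, Matrix.det_fin_two_of]
    field_simp
    ring
  rw [hJtr, hJdet, hMtr, hMdet]
  -- abbreviations
  set s := Real.sqrt (d / α ^ 3) with hs
  have hs0 : 0 < s := Real.sqrt_pos.2 (by positivity)
  have hs2 : s ^ 2 = d / α ^ 3 := Real.sq_sqrt (by positivity)
  set q := α ^ 3 * s with hq
  have hq0 : 0 < q := by positivity
  have hq2 : q ^ 2 = d * α ^ 3 := by
    rw [hq, mul_pow, hs2]; field_simp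
  set P := α ^ 3 * (2 * b - 1) with hP
  -- bridging iffs
  have hA' : (-1 / α ^ 2 + α * (2 * b - 1) < 0) ↔ P < 1 := by
    rw [show -1 / α ^ 2 + α * (2 * b - 1) = (P - 1) / α ^ 2 by
      rw [hP]; field_simp; ring]
    rw [div_neg_iff]
    constructor
    · rintro (⟨h1, h2⟩ | ⟨h1, h2⟩) <;> linarith
    · intro h; right; exact ⟨by linarith, hα2⟩
  have hC' : (0 < -1 / α ^ 2 + α * (2 * b - 1) / d) ↔ d < P := by
    rw [show -1 / α ^ 2 + α * (2 * b - 1) / d = (P - d) / (α ^ 2 * d) by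
      rw [hP]; field_simp; ring]
    rw [div_pos_iff]
    constructor
    · rintro (⟨h1, h2⟩ | ⟨h1, h2⟩) <;> nlinarith
    · intro h; left; exact ⟨by linarith, by positivity⟩
  have hD' : (0 < (-1 / α ^ 2 + α * (2 * b - 1) / d) ^ 2 - 4 * (1 / (α * d)))
      ↔ 4 * (d * α ^ 3) < (P - d) ^ 2 := by
    rw [show (-1 / α ^ 2 + α * (2 * b - 1) / d) ^ 2 - 4 * (1 / (α * d))
        = ((P - d) ^ 2 - 4 * (d * α ^ 3)) / (α ^ 4 * d ^ 2) by
      rw [hP]; field_simp; ring]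
    rw [div_pos_iff]
    constructor
    · rintro (⟨h1, h2⟩ | ⟨h1, h2⟩) <;> nlinarith
    · intro h; left; exact ⟨by linarith, by positivity⟩
  have hL : ((1 / 2) * (1 + d / α ^ 3) + s < b) ↔ d + 2 * q < P := by
    have hdiv : α ^ 3 * (d / α ^ 3) = d := by field_simp
    constructor
    · intro h
      have h' : α ^ 3 * ((1 / 2) * (1 + d / α ^ 3) + s) < α ^ 3 * b :=
        (mul_lt_mul_iff_right₀ hα3).2 h
      rw [hP]; nlinarith
    · intro h
      rw [hP] at h
      rw [← mul_lt_mul_iff_right₀ hα3]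
      nlinarith
  have hR : (b < (1 / 2) * (1 + 1 / α ^ 3)) ↔ P < 1 := by
    have hdiv : α ^ 3 * (1 / α ^ 3) = 1 := by field_simp
    constructor
    · intro h
      have h' : α ^ 3 * b < α ^ 3 * ((1 / 2) * (1 + 1 / α ^ 3)) :=
        (mul_lt_mul_iff_right₀ hα3).2 h
      rw [hP]; nlinarith
    · intro h
      rw [hP] at h
      rw [← mul_lt_mul_iff_right₀ hα3]
      nlinarith
  rw [hA', hC', hD', hL, hR]
  constructor
  · rintro ⟨h1, -, h2, h3⟩
    refine ⟨?_, h1⟩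
    nlinarith [hq2, hq0]
  · rintro ⟨h1, h2⟩
    exact ⟨h2, by positivity, by nlinarith [hq0], by nlinarith [hq0]⟩
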